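/- (Regret-to-saddle-point conversion, the deterministic core of Theorem 1.) Let W be a nonempty convex subset of ℝ^p, Z a positive integer, B > 0, F : W → ℝ convex, and r_1, …, r_Z : W → ℝ convex; let G(w, λ) = F(w) + ∑_{j=1}^Z λ_j r_j(w) for λ ∈ Λ_B. Let N be a positive integer and w^1, …, w^N ∈ W, λ^1, …, λ^N ∈ Λ_B, and set w̄ = (1/N) ∑_{t=1}^N w^t and λ̄ = (1/N) ∑_{t=1}^N λ^t. Suppose there are ν₁, ν₂ ≥ 0 such that (1/N) ∑_{t=1}^N G(w^t, λ^t) − (1/N) ∑_{t=1}^N G(w, λ^t) ≤ ν₁ for every w ∈ W, and (1/N) ∑_{t=1}^N ∑_j λ_j r_j(w^t) − (1/N) ∑_{t=1}^N ∑_j λ^t_j r_j(w^t) ≤ ν₂ for every λ ∈ Λ_B. Then G(w̄, λ) − G(w, λ̄) ≤ ν₁ + ν₂ for all w ∈ W and λ ∈ Λ_B; in particular, (w̄, λ̄) is a (ν₁ + ν₂)-approximate saddle point of G. -/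

import Mathlib

lemma convexOn_sum' {E : Type*} [AddCommGroup E] [Module ℝ E] {s : Set E}
    (hs : Convex ℝ s) {ι : Type*} (t : Finset ι) (f : ι → E → ℝ)
    (hf : ∀ i ∈ t, ConvexOn ℝ s (f i)) :
    ConvexOn ℝ s (fun x => ∑ i ∈ t, f i x) := by
  classical
  induction t using Finset.induction with
  | empty => simpa using convexOn_const 0 hs
  | insert _ _ hx ih =>
    simp only [Finset.sum_insert hx]
    exact (hf _ (Finset.mem_insert_self _ _)).add
      (ih fun i hi => hf i (Finset.mem_insert_of_mem hi))

/-- Regret-to-saddle-point conversion (the deterministic core of Theorem 1):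
if the primal iterates `w^t ∈ W` have average regret at most `ν₁` against the
dual iterates `λ^t ∈ Λ_B`, and the dual iterates have average regret at most
`ν₂`, then the averaged pair `(w̄, λ̄)` satisfies
`G(w̄, λ) − G(w, λ̄) ≤ ν₁ + ν₂` for every `w ∈ W` and `λ ∈ Λ_B`, i.e. it is a
`(ν₁ + ν₂)`-approximate saddle point of `G`. -/
theorem stmt_6 {p : ℕ} (W : Set (Fin p → ℝ)) (hW_ne : W.Nonempty)
    (hW_cvx : Convex ℝ W) {Z : ℕ} (hZ : 0 < Z) {B : ℝ} (hB : 0 < B)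
    (F : (Fin p → ℝ) → ℝ) (hF : ConvexOn ℝ W F)
    (r : (Fin p → ℝ) → Fin Z → ℝ) (hr : ∀ j, ConvexOn ℝ W (fun w => r w j))
    (G : (Fin p → ℝ) → (Fin Z → ℝ) → ℝ)
    (hG : ∀ w lam, G w lam = F w + ∑ j, lam j * r w j)
    {N : ℕ} (hN : 0 < N)
    (w : ℕ → (Fin p → ℝ)) (hw : ∀ t < N, w t ∈ W)
    (lam : ℕ → (Fin Z → ℝ))
    (hlam : ∀ t < N, (∀ j, 0 ≤ lam t j) ∧ ∑ j, lam t j ≤ B)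
    (wbar : Fin p → ℝ) (hwbar : wbar = (N : ℝ)⁻¹ • ∑ t ∈ Finset.range N, w t)
    (lambar : Fin Z → ℝ)
    (hlambar : lambar = (N : ℝ)⁻¹ • ∑ t ∈ Finset.range N, lam t)
    {ν₁ ν₂ : ℝ} (hν₁ : 0 ≤ ν₁) (hν₂ : 0 ≤ ν₂)
    (hregret_w : ∀ w' ∈ W,
      (N : ℝ)⁻¹ * ∑ t ∈ Finset.range N, G (w t) (lam t) -
        (N : ℝ)⁻¹ * ∑ t ∈ Finset.range N, G w' (lam t) ≤ ν₁)
    (hregret_lam : ∀ lam' : Fin Z → ℝ, (∀ j, 0 ≤ lam' j) → (∑ j, lam' j ≤ B) →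
      (N : ℝ)⁻¹ * ∑ t ∈ Finset.range N, ∑ j, lam' j * r (w t) j -
        (N : ℝ)⁻¹ * ∑ t ∈ Finset.range N, ∑ j, lam t j * r (w t) j ≤ ν₂) :
    ∀ w' ∈ W, ∀ lam' : Fin Z → ℝ, (∀ j, 0 ≤ lam' j) → (∑ j, lam' j ≤ B) →
      G wbar lam' - G w' lambar ≤ ν₁ + ν₂ := by
  intro w' hw' lam' hlam'pos hlam'sum
  have hNne : (N : ℝ) ≠ 0 := Nat.cast_ne_zero.mpr hN.ne'
  -- convexity of x ↦ G x lam'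
  have hh : ConvexOn ℝ W (fun x => F x + ∑ j, lam' j * r x j) :=
    hF.add (convexOn_sum' hW_cvx Finset.univ (fun j x => lam' j * r x j)
      (fun j _ => by simpa [smul_eq_mul] using (hr j).smul (hlam'pos j)))
  -- Jensen: G wbar lam' ≤ (1/N) ∑ G (w t) lam'
  have hA : G wbar lam' ≤ (N : ℝ)⁻¹ * ∑ t ∈ Finset.range N, G (w t) (lam') := by
    have hsum1 : ∑ _t ∈ Finset.range N, (N : ℝ)⁻¹ = 1 := by
      simp [Finset.sum_const, hNne]
    have hwbar' : wbar = ∑ t ∈ Finset.range N, (N : ℝ)⁻¹ • w t := by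
      rw [hwbar, Finset.smul_sum]
    have := hh.map_sum_le (t := Finset.range N) (w := fun _ => (N : ℝ)⁻¹)
      (p := fun t => w t) (fun _ _ => by positivity) hsum1
      (fun t ht => hw t (Finset.mem_range.mp ht))
    rw [← hwbar'] at this
    calc G wbar lam' = F wbar + ∑ j, lam' j * r wbar j := hG _ _
      _ ≤ ∑ t ∈ Finset.range N, (N : ℝ)⁻¹ • (F (w t) + ∑ j, lam' j * r (w t) j) := this
      _ = (N : ℝ)⁻¹ * ∑ t ∈ Finset.range N, G (w t) lam' := by
          rw [Finset.mul_sum]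
          exact Finset.sum_congr rfl fun t _ => by rw [hG, smul_eq_mul]
  -- linearity in λ: G w' lambar = (1/N) ∑ G w' (lam t)
  have hB2 : G w' lambar = (N : ℝ)⁻¹ * ∑ t ∈ Finset.range N, G w' (lam t) := by
    have hlb : ∀ j, lambar j = (N : ℝ)⁻¹ * ∑ t ∈ Finset.range N, lam t j := by
      intro j; rw [hlambar]; simp [Finset.sum_apply]
    have key : ∑ t ∈ Finset.range N, G w' (lam t) =
        (N : ℝ) * F w' + ∑ t ∈ Finset.range N, ∑ j, lam t j * r w' j := by
      simp only [hG]
      rw [Finset.sum_add_distrib]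
      simp [Finset.sum_const, Finset.card_range]
    have step : ∑ j, lambar j * r w' j =
        (N : ℝ)⁻¹ * ∑ t ∈ Finset.range N, ∑ j, lam t j * r w' j := by
      rw [Finset.sum_comm, Finset.mul_sum]
      exact Finset.sum_congr rfl fun j _ => by
        rw [hlb j, mul_assoc, Finset.sum_mul]
    rw [hG, key, mul_add, ← mul_assoc, inv_mul_cancel₀ hNne, one_mul, step]
  -- dual regret applied to lam'
  have hC : (N : ℝ)⁻¹ * ∑ t ∈ Finset.range N, G (w t) lam' -
      (N : ℝ)⁻¹ * ∑ t ∈ Finset.range N, G (w t) (lam t) ≤ ν₂ := by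
    have := hregret_lam lam' hlam'pos hlam'sum
    have heq : (N : ℝ)⁻¹ * ∑ t ∈ Finset.range N, G (w t) lam' -
        (N : ℝ)⁻¹ * ∑ t ∈ Finset.range N, G (w t) (lam t) =
        (N : ℝ)⁻¹ * ∑ t ∈ Finset.range N, ∑ j, lam' j * r (w t) j -
        (N : ℝ)⁻¹ * ∑ t ∈ Finset.range N, ∑ j, lam t j * r (w t) j := by
      simp only [hG, Finset.sum_add_distrib]
      ring
    rw [heq]; exact this
  have hD := hregret_w w' hw'
  linarith
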